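/- Let ω, ω̂, u ∈ ℝ, M, M̂ > 0, η, η̂ ∈ (0,1]. Consider on ℝ⁶ with coordinates q = (x,y,z,x̂,ŷ,ẑ) the drift vector field b = (−ωy − (M/2)x + uz, ωx − (M/2)y, −ux, −ω̂ŷ − (M̂/2)x̂ + uẑ + x̂ẑE(z,ẑ), ω̂x̂ − (M̂/2)ŷ + ŷẑE(z,ẑ), −ux̂ − (1−ẑ²)E(z,ẑ)) and the diffusion vector field g = (−√(ηM)xz, −√(ηM)yz, √(ηM)(1−z²), −√(η̂M̂)x̂ẑ, −√(η̂M̂)ŷẑ, √(η̂M̂)(1−ẑ²)). Then for f(q) = log(1−ẑ) and every q with ẑ ∈ (−1,1), the infinitesimal generator ℒf(q) := Σᵢ bᵢ(q)∂f/∂qᵢ + (1/2)Σᵢⱼ gᵢ(q)gⱼ(q)∂²f/∂qᵢ∂qⱼ equals (u·x̂ + (1−ẑ²)E(z,ẑ))/(1−ẑ) − (η̂M̂/2)(1+ẑ)². -/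

import Mathlib

/-- E(z,ẑ) := √(η̂M̂)(√(η̂M̂)·ẑ − √(ηM)·z). -/
noncomputable def Efun (η η' M M' z z' : ℝ) : ℝ :=
  Real.sqrt (η' * M') * (Real.sqrt (η' * M') * z' - Real.sqrt (η * M) * z)

/-- Bloch-coordinate drift vector field of the coupled stochastic master equations,
with coordinates q = (x, y, z, x̂, ŷ, ẑ). -/
noncomputable def bdrift (ω ω' u M M' η η' : ℝ) (q : Fin 6 → ℝ) : Fin 6 → ℝ :=
  ![-ω * q 1 - M / 2 * q 0 + u * q 2,
    ω * q 0 - M / 2 * q 1,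
    -u * q 0,
    -ω' * q 4 - M' / 2 * q 3 + u * q 5 + q 3 * q 5 * Efun η η' M M' (q 2) (q 5),
    ω' * q 3 - M' / 2 * q 4 + q 4 * q 5 * Efun η η' M M' (q 2) (q 5),
    -u * q 3 - (1 - (q 5) ^ 2) * Efun η η' M M' (q 2) (q 5)]

/-- Bloch-coordinate diffusion vector field of the coupled stochastic master equations. -/
noncomputable def gdiff (M M' η η' : ℝ) (q : Fin 6 → ℝ) : Fin 6 → ℝ :=
  ![-Real.sqrt (η * M) * q 0 * q 2,
    -Real.sqrt (η * M) * q 1 * q 2,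
    Real.sqrt (η * M) * (1 - (q 2) ^ 2),
    -Real.sqrt (η' * M') * q 3 * q 5,
    -Real.sqrt (η' * M') * q 4 * q 5,
    Real.sqrt (η' * M') * (1 - (q 5) ^ 2)]

/-- The infinitesimal generator ℒf(q) = Σᵢ bᵢ(q)∂f/∂qᵢ + (1/2)Σᵢⱼ gᵢ(q)gⱼ(q)∂²f/∂qᵢ∂qⱼ
of a diffusion with drift `b` and a single diffusion vector field `g`. -/
noncomputable def generator (b g : (Fin 6 → ℝ) → Fin 6 → ℝ)
    (f : (Fin 6 → ℝ) → ℝ) (q : Fin 6 → ℝ) : ℝ :=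
  (∑ i, b q i * fderiv ℝ f q (Pi.single i 1)) +
    (1/2) * ∑ i, ∑ j, g q i * g q j *
      fderiv ℝ (fun p => fderiv ℝ f p (Pi.single i 1)) q (Pi.single j 1)

theorem generator_of_log_one_sub_zhat (ω ω' u M M' η η' : ℝ)
    (hM : 0 < M) (hM' : 0 < M')
    (hη : η ∈ Set.Ioc (0 : ℝ) 1) (hη' : η' ∈ Set.Ioc (0 : ℝ) 1)
    (q : Fin 6 → ℝ) (hz' : q 5 ∈ Set.Ioo (-1 : ℝ) 1) :
    generator (bdrift ω ω' u M M' η η') (gdiff M M' η η')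
        (fun p => Real.log (1 - p 5)) q
      = (u * q 3 + (1 - (q 5) ^ 2) * Efun η η' M M' (q 2) (q 5)) / (1 - q 5)
        - η' * M' / 2 * (1 + q 5) ^ 2 := by
  obtain ⟨hz1, hz2⟩ := hz'
  set L : (Fin 6 → ℝ) →L[ℝ] ℝ := ContinuousLinearMap.proj 5 with hLdef
  have hL : ∀ p : Fin 6 → ℝ, HasFDerivAt (fun p : Fin 6 → ℝ => 1 - p 5) (0 - L) p := fun p =>
    (hasFDerivAt_const (1:ℝ) p).sub (L.hasFDerivAt)
  have hne : ∀ p : Fin 6 → ℝ, p 5 < 1 → 1 - p 5 ≠ 0 := fun p hp => by linarith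
  have hFd : ∀ p : Fin 6 → ℝ, p 5 < 1 →
      HasFDerivAt (fun p : Fin 6 → ℝ => Real.log (1 - p 5)) ((1 - p 5)⁻¹ • (0 - L)) p :=
    fun p hp => (hL p).log (hne p hp)
  have hd1 : ∀ i : Fin 6, fderiv ℝ (fun p : Fin 6 → ℝ => Real.log (1 - p 5)) q (Pi.single i 1)
      = (1 - q 5)⁻¹ * (0 - (Pi.single i 1 : Fin 6 → ℝ) 5) := fun i => by
    rw [(hFd q hz2).fderiv]
    simp [hLdef, ContinuousLinearMap.proj_apply]
  have hU : IsOpen {p : Fin 6 → ℝ | p 5 < 1} := isOpen_lt (continuous_apply 5) continuous_const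
  have hmem : {p : Fin 6 → ℝ | p 5 < 1} ∈ nhds q := hU.mem_nhds hz2
  have hne' : (1 : ℝ) - q 5 ≠ 0 := hne q hz2
  have hd2 : ∀ i j : Fin 6,
      fderiv ℝ (fun p => fderiv ℝ (fun p : Fin 6 → ℝ => Real.log (1 - p 5)) p (Pi.single i 1)) q
        (Pi.single j 1)
      = ((0 - (Pi.single i 1 : Fin 6 → ℝ) 5) * -((1 - q 5) ^ 2)⁻¹) *
          (0 - (Pi.single j 1 : Fin 6 → ℝ) 5) := fun i j => by
    have hev : (fun p => fderiv ℝ (fun p : Fin 6 → ℝ => Real.log (1 - p 5)) p (Pi.single i 1))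
        =ᶠ[nhds q] (fun p : Fin 6 → ℝ =>
          (0 - (Pi.single i 1 : Fin 6 → ℝ) 5) * (1 - p 5)⁻¹) :=
      Filter.eventually_of_mem hmem (fun p hp => by
        have h := (hFd p hp).fderiv
        simp only [h, ContinuousLinearMap.smul_apply, ContinuousLinearMap.sub_apply,
          ContinuousLinearMap.zero_apply, hLdef, ContinuousLinearMap.proj_apply, smul_eq_mul]
        ring)
    rw [hev.fderiv_eq]
    have hinv : HasDerivAt (fun t : ℝ => (0 - (Pi.single i 1 : Fin 6 → ℝ) 5) * t⁻¹)
        ((0 - (Pi.single i 1 : Fin 6 → ℝ) 5) * -(((1 : ℝ) - q 5) ^ 2)⁻¹) (1 - q 5) :=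
      (hasDerivAt_inv hne').const_mul _
    have h : HasFDerivAt
        (fun p : Fin 6 → ℝ => (0 - (Pi.single i 1 : Fin 6 → ℝ) 5) * (1 - p 5)⁻¹)
        (((0 - (Pi.single i 1 : Fin 6 → ℝ) 5) * -(((1 : ℝ) - q 5) ^ 2)⁻¹) • (0 - L)) q :=
      by have := hinv.comp_hasFDerivAt q (hL q); exact this
    rw [h.fderiv]
    simp only [ContinuousLinearMap.smul_apply, ContinuousLinearMap.sub_apply,
      ContinuousLinearMap.zero_apply, hLdef, ContinuousLinearMap.proj_apply, smul_eq_mul]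
  have hs : Real.sqrt (η' * M') ^ 2 = η' * M' :=
    Real.sq_sqrt (mul_pos hη'.1 hM').le
  have hb5 : bdrift ω ω' u M M' η η' q 5
      = -u * q 3 - (1 - (q 5) ^ 2) * Efun η η' M M' (q 2) (q 5) := rfl
  have hg5 : gdiff M M' η η' q 5 = Real.sqrt (η' * M') * (1 - (q 5) ^ 2) := rfl
  have h0 : (Pi.single (0 : Fin 6) (1:ℝ) : Fin 6 → ℝ) 5 = 0 := Pi.single_eq_of_ne (by decide) 1
  have h1 : (Pi.single (1 : Fin 6) (1:ℝ) : Fin 6 → ℝ) 5 = 0 := Pi.single_eq_of_ne (by decide) 1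
  have h2 : (Pi.single (2 : Fin 6) (1:ℝ) : Fin 6 → ℝ) 5 = 0 := Pi.single_eq_of_ne (by decide) 1
  have h3 : (Pi.single (3 : Fin 6) (1:ℝ) : Fin 6 → ℝ) 5 = 0 := Pi.single_eq_of_ne (by decide) 1
  have h4 : (Pi.single (4 : Fin 6) (1:ℝ) : Fin 6 → ℝ) 5 = 0 := Pi.single_eq_of_ne (by decide) 1
  have h5 : (Pi.single (5 : Fin 6) (1:ℝ) : Fin 6 → ℝ) 5 = 1 := Pi.single_eq_same 5 1
  unfold generator
  simp only [hd1, hd2, Fin.sum_univ_six, h0, h1, h2, h3, h4, h5]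
  norm_num [hb5, hg5]
  rw [← hs]
  field_simp
  rw [Real.sqrt_sq (Real.sqrt_nonneg _)]
  ring
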